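/- Let $(p_j)_{j\ge 0}$ and $(q_j)_{j\ge 0}$ be sequences of nonnegative reals with $\sum_{j=0}^\infty p_j = \sum_{j=0}^\infty q_j < \infty$ and $\sum_{j=0}^k q_j \ge \sum_{j=0}^k p_j$ for every $k \ge 0$. Then there exist numbers $s_{k,j} \in [0,1]$ for $0 \le j \le k$ such that $\sum_{j=0}^k s_{k,j} q_j = p_k$ for every $k \ge 0$ and $\sum_{k=j}^\infty s_{k,j} = 1$ for every $j \ge 0$. -/

import Mathlib

open Finset Filter Topology

private lemma min_sub_mono (a a' x y : ℝ) (ha : a ≤ a') (hx : x ≤ y) :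
    min a' x - min a x ≤ min a' y - min a y := by
  simp only [min_def]; split_ifs <;> linarith

private lemma min_sub_lip (a a' x y : ℝ) (ha : a ≤ a') (hx : x ≤ y) :
    (min a' y - min a y) - (min a' x - min a x) ≤ y - x := by
  simp only [min_def]; split_ifs <;> linarith

/-- Mass redistribution lemma (Proposition 4.8): given nonnegative summable
sequences `p, q` with equal total mass and `∑_{j ≤ k} p_j ≤ ∑_{j ≤ k} q_j` for
every `k`, there exist `s_{k,j} ∈ [0,1]` (`0 ≤ j ≤ k`) with
`∑_{j=0}^k s_{k,j} q_j = p_k` for all `k` and `∑_{k ≥ j} s_{k,j} = 1` for all `j`. -/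
theorem mass_redistribution (p q : ℕ → ℝ)
    (hp : ∀ j, 0 ≤ p j) (hq : ∀ j, 0 ≤ q j)
    (hps : Summable p) (hqs : Summable q)
    (heq : ∑' j, p j = ∑' j, q j)
    (hpart : ∀ k, ∑ j ∈ Finset.range (k + 1), p j ≤ ∑ j ∈ Finset.range (k + 1), q j) :
    ∃ s : ℕ → ℕ → ℝ,
      (∀ k j, j ≤ k → s k j ∈ Set.Icc (0:ℝ) 1) ∧
      (∀ k, ∑ j ∈ Finset.range (k + 1), s k j * q j = p k) ∧
      (∀ j, HasSum (fun i : ℕ => s (j + i) j) 1) := by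
  set P : ℕ → ℝ := fun k => ∑ i ∈ Finset.range k, p i with hPdef
  set Q : ℕ → ℝ := fun k => ∑ i ∈ Finset.range k, q i with hQdef
  set m : ℕ → ℕ → ℝ := fun k j =>
    (min (P (k+1)) (Q (j+1)) - min (P k) (Q (j+1)))
      - (min (P (k+1)) (Q j) - min (P k) (Q j)) with hmdef
  have hPsucc : ∀ k, P (k+1) = P k + p k := fun k => Finset.sum_range_succ p k
  have hQsucc : ∀ k, Q (k+1) = Q k + q k := fun k => Finset.sum_range_succ q k
  have hPmono : Monotone P := monotone_nat_of_le_succ fun n => by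
    rw [hPsucc]; linarith [hp n]
  have hQmono : Monotone Q := monotone_nat_of_le_succ fun n => by
    rw [hQsucc]; linarith [hq n]
  have hP0 : P 0 = 0 := by simp [hPdef]
  have hQ0 : Q 0 = 0 := by simp [hQdef]
  have hPnonneg : ∀ k, 0 ≤ P k := fun k => hP0 ▸ hPmono (Nat.zero_le k)
  have hQnonneg : ∀ k, 0 ≤ Q k := fun k => hQ0 ▸ hQmono (Nat.zero_le k)
  have hPQ : ∀ n, P n ≤ Q n := by
    intro n
    cases n with
    | zero => simp [hP0, hQ0]
    | succ k => exact hpart k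
  have hQtsum : ∀ n, Q n ≤ ∑' j, q j := fun n => Summable.sum_le_tsum _ (fun i _ => hq i) hqs
  have hm_nonneg : ∀ k j, 0 ≤ m k j := by
    intro k j
    have := min_sub_mono (P k) (P (k+1)) (Q j) (Q (j+1))
      (hPmono (Nat.le_succ k)) (hQmono (Nat.le_succ j))
    simp only [hmdef]; linarith
  have hm_le : ∀ k j, m k j ≤ q j := by
    intro k j
    have := min_sub_lip (P k) (P (k+1)) (Q j) (Q (j+1))
      (hPmono (Nat.le_succ k)) (hQmono (Nat.le_succ j))
    have hq' := hQsucc j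
    simp only [hmdef]; linarith
  have hm_zero : ∀ k j, k < j → m k j = 0 := by
    intro k j hkj
    have h1 : P (k+1) ≤ Q j := le_trans (hPQ (k+1)) (hQmono hkj)
    have h2 : P k ≤ Q j := le_trans (hPmono (Nat.le_succ k)) h1
    have h3 : P (k+1) ≤ Q (j+1) := le_trans h1 (hQmono (Nat.le_succ j))
    have h4 : P k ≤ Q (j+1) := le_trans h2 (hQmono (Nat.le_succ j))
    simp only [hmdef, min_eq_left h1, min_eq_left h2, min_eq_left h3, min_eq_left h4]
    ring
  have hrow : ∀ k, ∑ j ∈ Finset.range (k+1), m k j = p k := by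
    intro k
    have ht := Finset.sum_range_sub
      (fun t => min (P (k+1)) (Q t) - min (P k) (Q t)) (k+1)
    have hsum : ∑ j ∈ Finset.range (k+1), m k j
        = (min (P (k+1)) (Q (k+1)) - min (P k) (Q (k+1)))
          - (min (P (k+1)) (Q 0) - min (P k) (Q 0)) := by
      rw [← ht]
    rw [hsum, hQ0, min_eq_right (hPnonneg (k+1)), min_eq_right (hPnonneg k),
      min_eq_left (hPQ (k+1)), min_eq_left (le_trans (hPmono (Nat.le_succ k)) (hPQ (k+1))),
      hPsucc]
    ring
  have hcol : ∀ j N, ∑ k ∈ Finset.range N, m k j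
      = min (P N) (Q (j+1)) - min (P N) (Q j) := by
    intro j N
    have ht := Finset.sum_range_sub (fun t => min (P t) (Q (j+1)) - min (P t) (Q j)) N
    have hsum : ∑ k ∈ Finset.range N, m k j
        = (min (P N) (Q (j+1)) - min (P N) (Q j))
          - (min (P 0) (Q (j+1)) - min (P 0) (Q j)) := by
      rw [← ht]
      exact Finset.sum_congr rfl fun k _ => by simp only [hmdef]; ring
    rw [hsum, hP0, min_eq_left (hQnonneg (j+1)), min_eq_left (hQnonneg j)]
    ring
  -- limit of P
  have hPtend : Tendsto P atTop (𝓝 (∑' j, q j)) := by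
    have := hps.hasSum.tendsto_sum_nat
    rwa [heq] at this
  refine ⟨fun k j => if q j = 0 then (if k = j then 1 else 0) else m k j / q j, ?_, ?_, ?_⟩
  · intro k j _
    by_cases hqj : q j = 0
    · simp only [hqj, if_true]
      split_ifs <;> constructor <;> norm_num
    · have hqpos : 0 < q j := lt_of_le_of_ne (hq j) (Ne.symm hqj)
      simp only [hqj, if_false]
      exact ⟨div_nonneg (hm_nonneg k j) (hq j), (div_le_one hqpos).2 (hm_le k j)⟩
  · intro k
    rw [← hrow k]
    apply Finset.sum_congr rfl
    intro j _
    by_cases hqj : q j = 0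
    · have : m k j = 0 := le_antisymm (hqj ▸ hm_le k j) (hm_nonneg k j)
      simp [hqj, this]
    · simp [hqj, div_mul_cancel₀ _ hqj]
  · intro j
    by_cases hqj : q j = 0
    · simp only [hqj, if_true]
      have : (fun i : ℕ => if j + i = j then (1:ℝ) else 0)
          = fun i : ℕ => if i = 0 then (1:ℝ) else 0 := by
        funext i
        simp [Nat.add_eq_left]
      rw [this]
      exact hasSum_ite_eq 0 1
    · have hqpos : 0 < q j := lt_of_le_of_ne (hq j) (Ne.symm hqj)
      simp only [hqj, if_false]
      rw [hasSum_iff_tendsto_nat_of_nonneg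
        (fun i => div_nonneg (hm_nonneg (j+i) j) (hq j)) 1]
      have hpartial : ∀ N : ℕ, ∑ i ∈ Finset.range N, m (j+i) j / q j
          = (min (P (j+N)) (Q (j+1)) - min (P (j+N)) (Q j)) / q j := by
        intro N
        rw [← Finset.sum_div]
        congr 1
        have hshift : ∑ k ∈ Finset.range (j+N), m k j
            = ∑ k ∈ Finset.range j, m k j + ∑ i ∈ Finset.range N, m (j+i) j :=
          Finset.sum_range_add (fun k => m k j) j N
        have hz : ∑ k ∈ Finset.range j, m k j = 0 :=
          Finset.sum_eq_zero fun k hk => hm_zero k j (Finset.mem_range.1 hk)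
        have := hcol j (j+N)
        rw [hshift, hz, zero_add] at this
        exact this
      simp only [hpartial]
      have htend : Tendsto (fun N : ℕ => P (j+N)) atTop (𝓝 (∑' i, q i)) := by
        have hadd : Tendsto (fun N : ℕ => j + N) atTop atTop := by
          simpa [add_comm] using tendsto_add_atTop_nat j
        exact hPtend.comp hadd
      have hmin : Tendsto
          (fun N : ℕ => (min (P (j+N)) (Q (j+1)) - min (P (j+N)) (Q j)) / q j)
          atTop (𝓝 ((min (∑' i, q i) (Q (j+1)) - min (∑' i, q i) (Q j)) / q j)) :=
        (((htend.min tendsto_const_nhds).sub (htend.min tendsto_const_nhds)).div_const _)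
      have hval : (min (∑' i, q i) (Q (j+1)) - min (∑' i, q i) (Q j)) / q j = 1 := by
        rw [min_eq_right (hQtsum (j+1)), min_eq_right (hQtsum j), hQsucc]
        field_simp
        ring
      rwa [hval] at hmin
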